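/- Suppose k ≥ 3. Let G be a k-regular undirected connected graph and U its Grover transfer matrix. Then the negative support of U² satisfies (U²)⁻ = S U⁺ + U⁺ S, where S = S(G) is the shift operator and U⁺ is the positive support of U. -/

import Mathlib

open Matrix Polynomial

noncomputable section

variable {V : Type} [Fintype V] [DecidableEq V]

/-- The set of symmetric arcs of a simple graph `G`: ordered pairs of adjacent vertices. -/
abbrev GArc (G : SimpleGraph V) : Type := {p : V × V // G.Adj p.1 p.2}

/-- The origin of an arc. -/
def arcO {G : SimpleGraph V} (a : GArc G) : V := a.1.1

/-- The terminus of an arc. -/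
def arcT {G : SimpleGraph V} (a : GArc G) : V := a.1.2

/-- The inverse of an arc. -/
def arcInv {G : SimpleGraph V} (a : GArc G) : GArc G := ⟨(a.1.2, a.1.1), a.2.symm⟩

/-- The boundary matrix `K`, with `K_{v,a} = δ_{v,t(a)} / √(deg t(a))`. -/
def bdK (G : SimpleGraph V) [DecidableRel G.Adj] : Matrix V (GArc G) ℂ :=
  fun v a => if v = arcT a then ((1 / Real.sqrt (G.degree (arcT a)) : ℝ) : ℂ) else 0

/-- The coin operator `C = 2K*K - I`. -/
def coinC (G : SimpleGraph V) [DecidableRel G.Adj] : Matrix (GArc G) (GArc G) ℂ :=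
  (2 : ℂ) • ((bdK G)ᴴ * bdK G) - 1

/-- The shift operator `S`, with `S_{ab} = δ_{a,b⁻¹}`. -/
def shiftS (G : SimpleGraph V) : Matrix (GArc G) (GArc G) ℂ :=
  fun a b => if a = arcInv b then 1 else 0

/-- The perturbed shift `S_θ`, with `(S_θ)_{ab} = e^{iθ(b)} δ_{a,b⁻¹}`. -/
def shiftStheta (G : SimpleGraph V) (θ : GArc G → ℝ) : Matrix (GArc G) (GArc G) ℂ :=
  fun a b => if a = arcInv b then Complex.exp ((θ b : ℂ) * Complex.I) else 0

/-- The Grover transfer matrix `U = SC`. -/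
def groverU (G : SimpleGraph V) [DecidableRel G.Adj] : Matrix (GArc G) (GArc G) ℂ :=
  shiftS G * coinC G

/-- The transfer matrix `U_θ = S_θ C`. -/
def transferU (G : SimpleGraph V) [DecidableRel G.Adj] (θ : GArc G → ℝ) :
    Matrix (GArc G) (GArc G) ℂ :=
  shiftStheta G θ * coinC G

/-- The diagonal matrix `D_θ` with `(D_θ)_{ab} = e^{iθ(a)} δ_{ab}`. -/
def Dtheta (G : SimpleGraph V) (θ : GArc G → ℝ) : Matrix (GArc G) (GArc G) ℂ :=
  Matrix.diagonal fun a => Complex.exp ((θ a : ℂ) * Complex.I)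

/-- The positive support of a (real-valued) complex matrix. -/
def suppPos {α : Type} (M : Matrix α α ℂ) : Matrix α α ℂ :=
  fun a b => if 0 < (M a b).re then 1 else 0

/-- The negative support of a (real-valued) complex matrix. -/
def suppNeg {α : Type} (M : Matrix α α ℂ) : Matrix α α ℂ :=
  fun a b => if (M a b).re < 0 then 1 else 0

/-- The positive support of a real matrix. -/
def suppPosR {α : Type} (M : Matrix α α ℝ) : Matrix α α ℝ :=
  fun a b => if 0 < M a b then 1 else 0

/-- The negative support of a real matrix. -/
def suppNegR {α : Type} (M : Matrix α α ℝ) : Matrix α α ℝ :=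
  fun a b => if M a b < 0 then 1 else 0

/-- A digraph on `V`: an irreflexive (Boolean) arc relation. -/
structure Dgraph (V : Type) where
  adj : V → V → Bool
  loopless : ∀ v, adj v v = false

namespace Dgraph

/-- `(x,y)` is an arc of `D`. -/
def Adj (D : Dgraph V) (x y : V) : Prop := D.adj x y = true

instance (D : Dgraph V) : DecidableRel D.Adj := fun _ _ => by unfold Adj; infer_instance

/-- The underlying (undirected simple) graph `G^±`. -/
def underlying (D : Dgraph V) : SimpleGraph V where
  Adj x y := D.Adj x y ∨ D.Adj y x
  symm := ⟨fun _ _ h => h.symm⟩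
  loopless := ⟨fun v h => by
    rcases h with h | h <;> exact absurd h (by simp [Adj, D.loopless v])⟩

instance (D : Dgraph V) : DecidableRel D.underlying.Adj :=
  fun x y => inferInstanceAs (Decidable (D.Adj x y ∨ D.Adj y x))

/-- The transpose digraph `G⁻¹`. -/
def transpose (D : Dgraph V) : Dgraph V where
  adj x y := D.adj y x
  loopless := D.loopless

end Dgraph

/-- The `η`-function of a digraph `D`: `η` on `A∖A⁻¹`, `-η` on `A⁻¹∖A`, `0` on digons. -/
def etaFun (D : Dgraph V) (η : ℝ) (a : GArc D.underlying) : ℝ :=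
  if D.Adj (arcO a) (arcT a) then (if D.Adj (arcT a) (arcO a) then 0 else η) else -η

/-- The `η`-Hermitian adjacency matrix `H_η`. -/
def Heta (D : Dgraph V) (η : ℝ) : Matrix V V ℂ :=
  fun x y =>
    if D.Adj x y then (if D.Adj y x then 1 else Complex.exp ((η : ℂ) * Complex.I))
    else if D.Adj y x then Complex.exp (-(η : ℂ) * Complex.I) else 0

/-- The diagonal matrix `D^{-1/2}` of inverse square roots of degrees. -/
def degHalfInv (D : Dgraph V) : Matrix V V ℂ :=
  Matrix.diagonal fun x => ((1 / Real.sqrt (D.underlying.degree x) : ℝ) : ℂ)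

/-- The normalized `η`-Hermitian adjacency matrix `H̃_η = D^{-1/2} H_η D^{-1/2}`. -/
def normHeta (D : Dgraph V) (η : ℝ) : Matrix V V ℂ :=
  degHalfInv D * Heta D η * degHalfInv D

/-- The multiset of preimages of `μ` under `φ(z) = (z + z⁻¹)/2` on the unit circle:
the distinct roots of `z² - 2μz + 1`. -/
def phiInv (μ : ℂ) : Multiset ℂ :=
  ((X ^ 2 - Polynomial.C (2 * μ) * X + 1 : Polynomial ℂ).roots).dedup

/-- A closed path in a graph: a nonempty chain of arcs returning to its start. -/
structure ClosedPath (G : SimpleGraph V) where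
  arcs : List (GArc G)
  ne : arcs ≠ []
  chain : arcs.Chain' fun a b => arcT a = arcO b
  closed : arcT (arcs.getLast ne) = arcO (arcs.head ne)

/-- `ℐ(c) = Σ_j θ(a_j)` for a closed path `c`. -/
def pathSum {G : SimpleGraph V} (θ : GArc G → ℝ) (c : ClosedPath G) : ℝ :=
  (c.arcs.map θ).sum

/-- `x ∈ 2πℤ`. -/
def in2piZ (x : ℝ) : Prop := ∃ m : ℤ, x = 2 * Real.pi * m

/-- `x ∈ 2π(ℤ + 1/2)`. -/
def in2piZhalf (x : ℝ) : Prop := ∃ m : ℤ, x = 2 * Real.pi * (m + 1 / 2)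

/-- The matrix `F_t` with `(F_t)_{x,a} = δ_{x,t(a)}`. -/
def Ft (G : SimpleGraph V) : Matrix V (GArc G) ℂ := fun x a => if x = arcT a then 1 else 0

/-- The matrix `F_o` with `(F_o)_{x,a} = δ_{x,o(a)}`. -/
def Fo (G : SimpleGraph V) : Matrix V (GArc G) ℂ := fun x a => if x = arcO a then 1 else 0

/-- The 0/1 matrix `R` with `R_{ab} = 1` iff `m(a,b) = (t(b),o(a)) ∈ A(G) ∩ A(G)⁻¹`. -/
def Rmat (D : Dgraph V) : Matrix (GArc D.underlying) (GArc D.underlying) ℂ :=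
  fun a b => if D.Adj (arcT b) (arcO a) ∧ D.Adj (arcO a) (arcT b) then 1 else 0

/-- `U_θ^{(n,+)}`: the 0/1 matrix with `(a,b)` entry `1` iff `Re(D_θ U_θⁿ)_{ab} > 0`. -/
def suppPow (D : Dgraph V) (η : ℝ) (n : ℕ) :
    Matrix (GArc D.underlying) (GArc D.underlying) ℂ :=
  suppPos (Dtheta D.underlying (etaFun D η) * transferU D.underlying (etaFun D η) ^ n)

/-- `U_θ^{(n,−)}`: the 0/1 matrix with `(a,b)` entry `1` iff `Re(D_θ U_θⁿ)_{ab} < 0`. -/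
def suppPowNeg (D : Dgraph V) (η : ℝ) (n : ℕ) :
    Matrix (GArc D.underlying) (GArc D.underlying) ℂ :=
  suppNeg (Dtheta D.underlying (etaFun D η) * transferU D.underlying (etaFun D η) ^ n)

/-- The number of digons of a digraph. -/
def digonCount (D : Dgraph V) : ℕ :=
  (Finset.univ.filter fun p : V × V => D.Adj p.1 p.2 ∧ D.Adj p.2 p.1).card / 2

/-- The digraph `Y_{a,n-a}`: two complete (digon) blocks `[a]` and `[n]∖[a]`, with all
arcs from the first block to the second. -/
def Ydigraph (n a : ℕ) : Dgraph (Fin n) where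
  adj x y := decide ((x ≠ y) ∧
    ((x.val < a ∧ y.val < a) ∨ (a ≤ x.val ∧ a ≤ y.val) ∨ (x.val < a ∧ a ≤ y.val)))
  loopless := fun v => by simp

/-- The shift operator as a real matrix. -/
def shiftSR (G : SimpleGraph V) : Matrix (GArc G) (GArc G) ℝ :=
  fun a b => if a = arcInv b then 1 else 0

/-- The Grover transfer matrix as a real matrix, given by its entries
`U_{ab} = (2/deg t(b)) δ_{t(b),o(a)} − δ_{a⁻¹,b}`. -/
def groverEnt (G : SimpleGraph V) [DecidableRel G.Adj] : Matrix (GArc G) (GArc G) ℝ :=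
  fun a b => 2 / (G.degree (arcT b)) * (if arcT b = arcO a then 1 else 0)
    - (if arcInv a = b then 1 else 0)

section Stmt14Aux

variable {G : SimpleGraph V}

lemma arcInv_invol (a : GArc G) : arcInv (arcInv a) = a := rfl

lemma arcInv_eq_iff (a b : GArc G) : arcInv a = b ↔ a = arcInv b := by
  constructor
  · rintro rfl; rfl
  · rintro rfl; rfl

lemma arcInv_inj {a b : GArc G} (h : arcInv a = arcInv b) : a = b := by
  have := congrArg arcInv h; simpa [arcInv_invol] using this

lemma arc_ext {a b : GArc G} (h1 : arcO a = arcO b) (h2 : arcT a = arcT b) : a = b := by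
  apply Subtype.ext
  exact Prod.ext h1 h2

lemma sum_delta_left [DecidableRel G.Adj] (f : GArc G → ℝ) (x : GArc G) :
    ∑ c : GArc G, (if c = x then (1:ℝ) else 0) * f c = f x := by
  simp [ite_mul]

lemma sum_delta_right [DecidableRel G.Adj] (f : GArc G → ℝ) (x : GArc G) :
    ∑ c : GArc G, f c * (if c = x then (1:ℝ) else 0) = f x := by
  simp [mul_ite]

lemma sumTT [DecidableRel G.Adj] (a b : GArc G) :
    ∑ c : GArc G, (if arcT c = arcO a then (1:ℝ) else 0) * (if arcT b = arcO c then 1 else 0)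
      = if G.Adj (arcT b) (arcO a) then 1 else 0 := by
  by_cases h : G.Adj (arcT b) (arcO a)
  · rw [if_pos h, Finset.sum_eq_single (⟨(arcT b, arcO a), h⟩ : GArc G)]
    · simp [arcT, arcO]
    · intro c _ hne
      by_cases h1 : arcT c = arcO a
      · by_cases h2 : arcT b = arcO c
        · exact absurd (show c = (⟨(arcT b, arcO a), h⟩ : GArc G) from
            Subtype.ext (Prod.ext h2.symm h1)) hne
        · simp [h2]
      · simp [h1]
    · simp
  · rw [if_neg h]
    apply Finset.sum_eq_zero
    intro c _
    by_cases h1 : arcT c = arcO a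
    · by_cases h2 : arcT b = arcO c
      · exfalso
        have hc : G.Adj (arcO c) (arcT c) := c.2
        rw [← h2, h1] at hc
        exact h hc
      · simp [h2]
    · simp [h1]

lemma suppPos_grover_entry [DecidableRel G.Adj] (k : ℕ) (hk : 3 ≤ k)
    (hreg : ∀ v, G.degree v = k) (x y : GArc G) :
    suppPosR (groverEnt G) x y = if arcT y = arcO x ∧ x ≠ arcInv y then 1 else 0 := by
  have hk3 : (3:ℝ) ≤ (k:ℝ) := by exact_mod_cast hk
  have hk0 : (0:ℝ) < (k:ℝ) := by linarith
  unfold suppPosR groverEnt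
  rw [hreg]
  by_cases h2 : arcInv x = y
  · have hx : x = arcInv y := (arcInv_eq_iff x y).mp h2
    have ht : arcT y = arcO x := by rw [← h2]; rfl
    rw [if_pos h2, if_pos ht]
    have hlt : 2 / (k:ℝ) * 1 - 1 < 0 := by
      have : 2 / (k:ℝ) ≤ 2 / 3 := by
        apply div_le_div_of_nonneg_left (by norm_num) (by norm_num) hk3
      linarith
    rw [if_neg (by linarith), if_neg (by simp [hx])]
  · rw [if_neg h2]
    have hx : x ≠ arcInv y := fun h => h2 ((arcInv_eq_iff x y).mpr h)
    by_cases h1 : arcT y = arcO x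
    · rw [if_pos h1, if_pos (show (0:ℝ) < 2/(k:ℝ)*1 - 0 by
        rw [mul_one, sub_zero]; exact div_pos (by norm_num) hk0), if_pos ⟨h1, hx⟩]
    · rw [if_neg h1, if_neg (show ¬ (0:ℝ) < 2/(k:ℝ)*0 - 0 by norm_num),
        if_neg (fun h => h1 h.1)]

lemma grover_sq_entry [DecidableRel G.Adj] (k : ℕ)
    (hreg : ∀ v, G.degree v = k) (a b : GArc G) :
    (groverEnt G * groverEnt G) a b =
      4 / (k:ℝ)^2 * (if G.Adj (arcT b) (arcO a) then 1 else 0)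
      - 2 / (k:ℝ) * (if arcO b = arcO a then 1 else 0)
      - 2 / (k:ℝ) * (if arcT b = arcT a then 1 else 0)
      + (if a = b then 1 else 0) := by
  rw [Matrix.mul_apply]
  unfold groverEnt
  simp only [hreg]
  have expand : ∀ c : GArc G,
      (2 / (k:ℝ) * (if arcT c = arcO a then 1 else 0) - (if arcInv a = c then 1 else 0)) *
      (2 / (k:ℝ) * (if arcT b = arcO c then 1 else 0) - (if arcInv c = b then 1 else 0)) =
      4 / (k:ℝ)^2 * ((if arcT c = arcO a then 1 else 0) * (if arcT b = arcO c then 1 else 0))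
      - 2 / (k:ℝ) * ((if arcT c = arcO a then 1 else 0) * (if arcInv c = b then 1 else 0))
      - 2 / (k:ℝ) * ((if arcInv a = c then 1 else 0) * (if arcT b = arcO c then 1 else 0))
      + (if arcInv a = c then 1 else 0) * (if arcInv c = b then 1 else 0) := by
    intro c; ring
  simp only [expand]
  simp only [Finset.sum_add_distrib, Finset.sum_sub_distrib, ← Finset.mul_sum]
  have e1 : ∀ c : GArc G, (if arcInv c = b then (1:ℝ) else 0) = (if c = arcInv b then 1 else 0) :=
    fun c => if_congr (arcInv_eq_iff c b) rfl rfl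
  have e2 : ∀ c : GArc G, (if arcInv a = c then (1:ℝ) else 0) = (if c = arcInv a then 1 else 0) :=
    fun c => if_congr eq_comm rfl rfl
  simp only [e1, e2]
  rw [sumTT a b]
  rw [sum_delta_right (fun c => if arcT c = arcO a then (1:ℝ) else 0) (arcInv b)]
  rw [sum_delta_left (fun c => if arcT b = arcO c then (1:ℝ) else 0) (arcInv a)]
  rw [sum_delta_left (fun c => if c = arcInv b then (1:ℝ) else 0) (arcInv a)]
  simp only [show arcT (arcInv b) = arcO b from rfl, show arcO (arcInv a) = arcT a from rfl]
  congr 1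
  exact if_congr ⟨fun h => arcInv_inj h, fun h => by rw [h]⟩ rfl rfl

end Stmt14Aux

/-- For a `k`-regular connected graph with `k ≥ 3`, the negative support of `U²` satisfies
`(U²)⁻ = S U⁺ + U⁺ S`. -/
theorem stmt14 {V : Type} [Fintype V] [DecidableEq V] (k : ℕ) (hk : 3 ≤ k)
    (G : SimpleGraph V) [DecidableRel G.Adj] (hconn : G.Connected)
    (hreg : ∀ v, G.degree v = k) :
    suppNegR (groverEnt G * groverEnt G) =
      shiftSR G * suppPosR (groverEnt G) + suppPosR (groverEnt G) * shiftSR G := by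
  have hk3 : (3:ℝ) ≤ (k:ℝ) := by exact_mod_cast hk
  have hk0 : (0:ℝ) < (k:ℝ) := by linarith
  funext a b
  -- RHS computation
  have hS : ∀ c : GArc G, shiftSR G a c = if c = arcInv a then 1 else 0 := by
    intro c
    unfold shiftSR
    exact if_congr ⟨fun h => by rw [h]; rfl, fun h => by rw [h]; rfl⟩ rfl rfl
  have hS' : ∀ c : GArc G, shiftSR G c b = if c = arcInv b then 1 else 0 := by
    intro c; rfl
  have hRHS : (shiftSR G * suppPosR (groverEnt G) + suppPosR (groverEnt G) * shiftSR G) a b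
      = (if arcT b = arcT a ∧ a ≠ b then 1 else 0)
        + (if arcO b = arcO a ∧ a ≠ b then 1 else 0) := by
    rw [Matrix.add_apply, Matrix.mul_apply, Matrix.mul_apply]
    simp only [hS, hS']
    rw [sum_delta_left (suppPosR (groverEnt G) · b) (arcInv a),
      sum_delta_right (suppPosR (groverEnt G) a ·) (arcInv b)]
    rw [suppPos_grover_entry k hk hreg (arcInv a) b,
      suppPos_grover_entry k hk hreg a (arcInv b)]
    have h1 : arcO (arcInv a) = arcT a := rfl
    have h2 : arcT (arcInv b) = arcO b := rfl
    have h3 : (arcInv a ≠ arcInv b) ↔ a ≠ b := by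
      constructor
      · intro h heq; exact h (by rw [heq])
      · intro h heq; exact h (arcInv_inj heq)
    have h4 : (a ≠ arcInv (arcInv b)) ↔ a ≠ b := by rw [arcInv_invol]
    rw [h1, h2]
    congr 1
    all_goals try simp only [h3]
    all_goals try simp only [h4]
  rw [hRHS]
  unfold suppNegR
  rw [grover_sq_entry k hreg a b]
  by_cases hab : a = b
  · subst hab
    have hA : G.Adj (arcT a) (arcO a) := a.2.symm
    have hkne : (k:ℝ) ≠ 0 := ne_of_gt hk0
    have hnn : ¬ (4 / (k:ℝ)^2 * 1 - 2 / (k:ℝ) * 1 - 2 / (k:ℝ) * 1 + 1 < 0) := by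
      push_neg
      have key : 4 / (k:ℝ)^2 * 1 - 2 / (k:ℝ) * 1 - 2 / (k:ℝ) * 1 + 1
          = (2 / (k:ℝ) - 1)^2 := by
        field_simp
        ring
      rw [key]
      exact sq_nonneg _
    rw [if_pos hA, if_pos rfl, if_pos rfl, if_pos rfl, if_neg hnn,
      if_neg (show ¬ (arcT a = arcT a ∧ a ≠ a) from fun h => h.2 rfl),
      if_neg (show ¬ (arcO a = arcO a ∧ a ≠ a) from fun h => h.2 rfl)]
    try norm_num
  · have hd : 4 / (k:ℝ)^2 < 2 / (k:ℝ) := by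
      rw [div_lt_div_iff₀ (by nlinarith) hk0]
      nlinarith [mul_le_mul_of_nonneg_left hk3 hk0.le]
    have h2pos : (0:ℝ) < 2 / (k:ℝ) := div_pos (by norm_num) hk0
    have h4pos : (0:ℝ) < 4 / (k:ℝ)^2 := div_pos (by norm_num) (by nlinarith)
    by_cases hP : arcO b = arcO a
    · by_cases hQ : arcT b = arcT a
      · exact absurd (arc_ext hP.symm hQ.symm) hab
      · rw [if_pos hP, if_neg hQ, if_neg hab,
          if_neg (show ¬ (arcT b = arcT a ∧ a ≠ b) from fun h => hQ h.1),
          if_pos (show arcO b = arcO a ∧ a ≠ b from ⟨hP, hab⟩)]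
        have hlt : 4 / (k:ℝ)^2 * (if G.Adj (arcT b) (arcO a) then 1 else 0)
            - 2 / (k:ℝ) * 1 - 2 / (k:ℝ) * 0 + 0 < 0 := by
          by_cases hA : G.Adj (arcT b) (arcO a)
          · rw [if_pos hA]; linarith
          · rw [if_neg hA]; linarith
        rw [if_pos hlt]
        try norm_num
    · by_cases hQ : arcT b = arcT a
      · rw [if_neg hP, if_pos hQ, if_neg hab,
          if_pos (show arcT b = arcT a ∧ a ≠ b from ⟨hQ, hab⟩),
          if_neg (show ¬ (arcO b = arcO a ∧ a ≠ b) from fun h => hP h.1)]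
        have hlt : 4 / (k:ℝ)^2 * (if G.Adj (arcT b) (arcO a) then 1 else 0)
            - 2 / (k:ℝ) * 0 - 2 / (k:ℝ) * 1 + 0 < 0 := by
          by_cases hA : G.Adj (arcT b) (arcO a)
          · rw [if_pos hA]; linarith
          · rw [if_neg hA]; linarith
        rw [if_pos hlt]
        try norm_num
      · rw [if_neg hP, if_neg hQ, if_neg hab,
          if_neg (show ¬ (arcT b = arcT a ∧ a ≠ b) from fun h => hQ h.1),
          if_neg (show ¬ (arcO b = arcO a ∧ a ≠ b) from fun h => hP h.1)]
        have hnn : ¬ (4 / (k:ℝ)^2 * (if G.Adj (arcT b) (arcO a) then 1 else 0)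
            - 2 / (k:ℝ) * 0 - 2 / (k:ℝ) * 0 + 0 < 0) := by
          push_neg
          by_cases hA : G.Adj (arcT b) (arcO a)
          · rw [if_pos hA]; linarith
          · rw [if_neg hA]; linarith
        rw [if_neg hnn]
        try norm_num
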